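/- Let R be a commutative Noetherian ring and a an ideal of R. If f : M → N is a homomorphism of a-adically complete R-modules, then both ker(f) and im(f) are a-adically complete. -/

import Mathlib

universe u

open Submodule

section Aux

variable {R : Type u} [CommRing R] {M : Type u} [AddCommGroup M] [Module R M]
variable {N : Type u} [AddCommGroup N] [Module R N]

/-- Decompose an element of `span s • P` as a finite combination. -/
lemma mem_finset_span_smul {s : Finset R} {P : Submodule R M} {x : M}
    (hx : x ∈ Ideal.span (s : Set R) • P) :
    ∃ c : R → M, (∀ g, c g ∈ P) ∧ x = ∑ g ∈ s, g • c g := by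
  refine Submodule.smul_induction_on hx ?_ ?_
  · intro r hr p hp
    obtain ⟨c, -, hc⟩ := mem_span_finset.mp hr
    refine ⟨fun g => c g • p, fun g => P.smul_mem _ hp, ?_⟩
    rw [← hc, Finset.sum_smul]
    refine Finset.sum_congr rfl fun g _ => ?_
    rw [smul_smul, smul_eq_mul, mul_comm]
  · rintro x y ⟨c, hc, rfl⟩ ⟨d, hd, rfl⟩
    exact ⟨fun g => c g + d g, fun g => P.add_mem (hc g) (hd g), by
      simp [smul_add, Finset.sum_add_distrib]⟩

lemma map_mem_pow_smul_top (a : Ideal R) (f : M →ₗ[R] N) {n : ℕ} {x : M}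
    (hx : x ∈ (a ^ n • ⊤ : Submodule R M)) : f x ∈ (a ^ n • ⊤ : Submodule R N) := by
  have : Submodule.map f (a ^ n • ⊤) ≤ a ^ n • ⊤ := by
    rw [Submodule.map_smul'']
    exact smul_mono_right _ le_top
  exact this (Submodule.mem_map_of_mem hx)

/-- Limits of "series" with rapidly decreasing terms in a precomplete module. -/
lemma exists_series_limit (a : Ideal R) [IsPrecomplete a M]
    (y : ℕ → M) (hy : ∀ m, y m ∈ (a ^ m • ⊤ : Submodule R M)) :
    ∃ L : M, ∀ T, L - ∑ m ∈ Finset.range T, y m ∈ (a ^ T • ⊤ : Submodule R M) := by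
  have hc : ∀ {T T' : ℕ}, T ≤ T' →
      (∑ m ∈ Finset.range T, y m) ≡ (∑ m ∈ Finset.range T', y m)
        [SMOD (a ^ T • ⊤ : Submodule R M)] := by
    intro T T' h
    rw [SModEq.sub_mem]
    have key : (∑ m ∈ Finset.range T', y m) - (∑ m ∈ Finset.range T, y m)
        ∈ (a ^ T • ⊤ : Submodule R M) := by
      rw [← Finset.sum_sdiff_eq_sub (Finset.range_subset_range.mpr h)]
      refine sum_mem fun m hm => ?_
      have hTm : T ≤ m := by
        simp only [Finset.mem_sdiff, Finset.mem_range, not_lt] at hm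
        exact hm.2
      exact smul_mono_left (Ideal.pow_le_pow_right hTm) (hy m)
    simpa [neg_sub] using neg_mem key
  obtain ⟨L, hL⟩ := IsPrecomplete.prec inferInstance (f := fun T => ∑ m ∈ Finset.range T, y m)
    fun {T T'} h => hc h
  exact ⟨L, fun T => by
    have := (SModEq.sub_mem).mp (hL T)
    simpa using neg_mem this⟩

/-- Any submodule of a Hausdorff module is Hausdorff. -/
lemma isHausdorff_submodule (a : Ideal R) [IsHausdorff a M] (P : Submodule R M) :
    IsHausdorff a P := by
  constructor
  intro x hx
  have hx0 : (x : M) = 0 := by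
    refine IsHausdorff.haus (inferInstance : IsHausdorff a M) _ fun n => ?_
    rw [SModEq.zero]
    have := (SModEq.zero).mp (hx n)
    have hle : (a ^ n • P : Submodule R M) ≤ a ^ n • ⊤ := smul_mono_right _ le_top
    exact hle ((mem_smul_top_iff _ _ _).mp this)
  exact Subtype.ext hx0

/-- Quotients of precomplete modules are precomplete. -/
lemma isPrecomplete_quotient (a : Ideal R) [IsPrecomplete a M] (K : Submodule R M) :
    IsPrecomplete a (M ⧸ K) := by
  constructor
  intro x hx
  have hmap : ∀ n : ℕ, (a ^ n • ⊤ : Submodule R (M ⧸ K)) =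
      Submodule.map K.mkQ (a ^ n • ⊤ : Submodule R M) := by
    intro n
    rw [Submodule.map_smul'', Submodule.map_top, Submodule.range_mkQ]
  have hd : ∀ n : ℕ, ∃ e : M, e ∈ (a ^ n • ⊤ : Submodule R M) ∧
      K.mkQ e = x (n + 1) - x n := by
    intro n
    have : x (n + 1) - x n ∈ (a ^ n • ⊤ : Submodule R (M ⧸ K)) := by
      have := (SModEq.sub_mem).mp (hx (Nat.le_succ n))
      simpa using neg_mem this
    rw [hmap n] at this
    obtain ⟨e, he, he'⟩ := this
    exact ⟨e, he, he'⟩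
  choose e he hke using hd
  obtain ⟨m0, hm0⟩ := K.mkQ_surjective (x 0)
  set m : ℕ → M := fun T => m0 + ∑ k ∈ Finset.range T, e k with hm
  have hmk : ∀ T, K.mkQ (m T) = x T := by
    intro T
    induction T with
    | zero => simpa [hm] using hm0
    | succ T ih =>
      have : m (T + 1) = m T + e T := by
        simp [hm, Finset.sum_range_succ, add_assoc]
      rw [this, map_add, ih, hke T]
      abel
  have hcauchy : ∀ {T T' : ℕ}, T ≤ T' →
      m T ≡ m T' [SMOD (a ^ T • ⊤ : Submodule R M)] := by
    intro T T' h
    rw [SModEq.sub_mem]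
    have : m T - m T' = -(∑ k ∈ Finset.range T' \ Finset.range T, e k) := by
      simp only [hm]
      rw [Finset.sum_sdiff_eq_sub (Finset.range_subset_range.mpr h)]
      abel
    rw [this]
    refine neg_mem (sum_mem fun k hk => ?_)
    have hTk : T ≤ k := by
      simp only [Finset.mem_sdiff, Finset.mem_range, not_lt] at hk
      exact hk.2
    exact smul_mono_left (Ideal.pow_le_pow_right hTk) (he k)
  obtain ⟨L, hL⟩ := IsPrecomplete.prec inferInstance (f := m) fun {T T'} h => hcauchy h
  refine ⟨K.mkQ L, fun n => ?_⟩
  rw [SModEq.sub_mem]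
  have : x n - K.mkQ L = K.mkQ (m n - L) := by rw [map_sub, hmk n]
  rw [this, hmap n]
  exact Submodule.mem_map_of_mem ((SModEq.sub_mem).mp (hL n))

/-- `M ⧸ ker f` is Hausdorff when `N` is Hausdorff. -/
lemma isHausdorff_quotient_ker (a : Ideal R) [IsHausdorff a N] (f : M →ₗ[R] N) :
    IsHausdorff a (M ⧸ LinearMap.ker f) := by
  constructor
  intro x hx
  obtain ⟨m, rfl⟩ := (LinearMap.ker f).mkQ_surjective x
  have hfm : f m = 0 := by
    refine IsHausdorff.haus (inferInstance : IsHausdorff a N) _ fun n => ?_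
    rw [SModEq.zero]
    have hmem : (LinearMap.ker f).mkQ m ∈ (a ^ n • ⊤ : Submodule R (M ⧸ LinearMap.ker f)) :=
      (SModEq.zero).mp (hx n)
    rw [show (a ^ n • ⊤ : Submodule R (M ⧸ LinearMap.ker f)) =
        Submodule.map (LinearMap.ker f).mkQ (a ^ n • ⊤ : Submodule R M) by
      rw [Submodule.map_smul'', Submodule.map_top, Submodule.range_mkQ]] at hmem
    obtain ⟨u, hu, hu'⟩ := hmem
    have hker : u - m ∈ LinearMap.ker f := (Submodule.Quotient.eq _).mp hu'
    have hfum : f u = f m := by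
      have h0 := LinearMap.mem_ker.mp hker
      rw [map_sub, sub_eq_zero] at h0
      exact h0
    rw [← hfum]
    exact map_mem_pow_smul_top a f hu
  have : ((LinearMap.ker f).mkQ m : M ⧸ LinearMap.ker f) = Submodule.Quotient.mk m := rfl
  rw [this, Submodule.Quotient.mk_eq_zero]
  exact LinearMap.mem_ker.mpr hfm

/-- Transfer Hausdorff along a linear equivalence. -/
lemma isHausdorff_of_linearEquiv (a : Ideal R) (e : M ≃ₗ[R] N) [IsHausdorff a M] :
    IsHausdorff a N := by
  constructor
  intro x hx
  have h : e.symm x = 0 := by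
    refine IsHausdorff.haus (inferInstance : IsHausdorff a M) _ fun n => ?_
    rw [SModEq.zero]
    exact map_mem_pow_smul_top a e.symm.toLinearMap ((SModEq.zero).mp (hx n))
  have := congrArg e h
  simpa using this

/-- Transfer precompleteness along a linear equivalence. -/
lemma isPrecomplete_of_linearEquiv (a : Ideal R) (e : M ≃ₗ[R] N) [IsPrecomplete a M] :
    IsPrecomplete a N := by
  constructor
  intro x hx
  have hcauchy : ∀ {m n : ℕ}, m ≤ n →
      e.symm (x m) ≡ e.symm (x n) [SMOD (a ^ m • ⊤ : Submodule R M)] := by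
    intro m n h
    rw [SModEq.sub_mem, ← map_sub]
    exact map_mem_pow_smul_top a e.symm.toLinearMap ((SModEq.sub_mem).mp (hx h))
  obtain ⟨L, hL⟩ := IsPrecomplete.prec (inferInstance : IsPrecomplete a M)
    (f := fun n => e.symm (x n)) fun {m n} h => hcauchy h
  refine ⟨e L, fun n => ?_⟩
  rw [SModEq.sub_mem]
  have h1 : x n - e L = e (e.symm (x n) - L) := by
    rw [map_sub]
    simp
  rw [h1]
  exact map_mem_pow_smul_top a e.toLinearMap ((SModEq.sub_mem).mp (hL n))

/-- The kernel of a map from a complete module to a Hausdorff module is precomplete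
(over a Noetherian ring). -/
lemma isPrecomplete_ker (a : Ideal R) [IsNoetherianRing R] [IsAdicComplete a M]
    [IsHausdorff a N] (f : M →ₗ[R] N) : IsPrecomplete a (LinearMap.ker f) := by
  constructor
  intro x hx
  have hxM : ∀ {m n : ℕ}, m ≤ n →
      ((x m : M)) ≡ (x n : M) [SMOD (a ^ m • ⊤ : Submodule R M)] := by
    intro m n h
    rw [SModEq.sub_mem]
    have h0 := (SModEq.sub_mem).mp (hx h)
    have h2 : ((x m : M)) - (x n : M) ∈ a ^ m • LinearMap.ker f := by
      simpa using (mem_smul_top_iff _ _ _).mp h0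
    have hle : (a ^ m • LinearMap.ker f : Submodule R M) ≤ a ^ m • ⊤ :=
      smul_mono_right _ le_top
    exact hle h2
  obtain ⟨L, hL⟩ := IsPrecomplete.prec (inferInstance : IsPrecomplete a M)
    (f := fun n => (x n : M)) fun {m n} h => hxM h
  have hL' : ∀ n, L - (x n : M) ∈ (a ^ n • ⊤ : Submodule R M) := fun n => by
    simpa [neg_sub] using neg_mem ((SModEq.sub_mem).mp (hL n))
  have hLK : f L = 0 := by
    refine IsHausdorff.haus (inferInstance : IsHausdorff a N) _ fun n => ?_
    rw [SModEq.zero]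
    have h1 : f L = f (L - (x n : M)) := by
      rw [map_sub, LinearMap.mem_ker.mp (x n).2, sub_zero]
    rw [h1]
    exact map_mem_pow_smul_top a f (hL' n)
  refine ⟨⟨L, LinearMap.mem_ker.mpr hLK⟩, fun n => ?_⟩
  obtain ⟨s, hs⟩ := IsNoetherian.noetherian (a ^ n)
  have hδ : ∀ m : ℕ, ∃ c : R → M, (∀ g, c g ∈ (a ^ m • LinearMap.ker f : Submodule R M)) ∧
      ((x (n + m + 1) : M)) - (x (n + m) : M) = ∑ g ∈ s, g • c g := by
    intro m
    have h0 := (SModEq.sub_mem).mp (hx (Nat.le_succ (n + m)))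
    have h0' : x (n + m + 1) - x (n + m) ∈ (a ^ (n + m) • ⊤ : Submodule R (LinearMap.ker f)) := by
      simpa [neg_sub] using neg_mem h0
    have h1 : ((x (n + m + 1) : M)) - (x (n + m) : M) ∈ a ^ (n + m) • LinearMap.ker f := by
      simpa using (mem_smul_top_iff _ _ _).mp h0'
    have hs' : Ideal.span (s : Set R) = a ^ n := hs
    have h2 : (a ^ (n + m) • LinearMap.ker f : Submodule R M)
        = Ideal.span (s : Set R) • (a ^ m • LinearMap.ker f) := by
      rw [pow_add, mul_smul, hs']
    rw [h2] at h1
    exact mem_finset_span_smul h1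
  choose c hc1 hc2 using hδ
  have hcK : ∀ m g, c m g ∈ LinearMap.ker f := fun m g => Submodule.smul_le_right (hc1 m g)
  have hcsmall : ∀ m g, c m g ∈ (a ^ m • ⊤ : Submodule R M) := fun m g => by
    have hle : (a ^ m • LinearMap.ker f : Submodule R M) ≤ a ^ m • ⊤ :=
      smul_mono_right _ le_top
    exact hle (hc1 m g)
  have hzex : ∀ g : R, ∃ z : M,
      ∀ T, z - ∑ m ∈ Finset.range T, c m g ∈ (a ^ T • ⊤ : Submodule R M) :=
    fun g => exists_series_limit a (fun m => c m g) (fun m => hcsmall m g)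
  choose z hzlim using hzex
  have hzK : ∀ g, f (z g) = 0 := by
    intro g
    refine IsHausdorff.haus (inferInstance : IsHausdorff a N) _ fun T => ?_
    rw [SModEq.zero]
    have h4 : f (z g) = f (z g - ∑ m ∈ Finset.range T, c m g) := by
      rw [map_sub, map_sum]
      rw [Finset.sum_congr rfl fun m _ => LinearMap.mem_ker.mp (hcK m g)]
      simp
    rw [h4]
    exact map_mem_pow_smul_top a f (hzlim g T)
  have hmain : L - (x n : M) = ∑ g ∈ s, g • z g := by
    rw [← sub_eq_zero]
    refine IsHausdorff.haus (inferInstance : IsHausdorff a M) _ fun T => ?_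
    rw [SModEq.zero]
    have hA : L - (x (n + T) : M) ∈ (a ^ T • ⊤ : Submodule R M) :=
      smul_mono_left (Ideal.pow_le_pow_right (Nat.le_add_left T n)) (hL' (n + T))
    have hB : ∀ g ∈ s, g • (z g - ∑ m ∈ Finset.range T, c m g)
        ∈ (a ^ T • ⊤ : Submodule R M) :=
      fun g _ => Submodule.smul_mem _ g (hzlim g T)
    have htel : ∑ m ∈ Finset.range T, (((x (n + m + 1) : M)) - (x (n + m) : M))
        = (x (n + T) : M) - (x n : M) := by
      have := Finset.sum_range_sub (f := fun m => (x (n + m) : M)) T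
      simpa [add_assoc] using this
    have hsum : ∑ g ∈ s, g • (∑ m ∈ Finset.range T, c m g)
        = (x (n + T) : M) - (x n : M) := by
      rw [Finset.sum_congr rfl fun g _ => Finset.smul_sum (r := g), Finset.sum_comm]
      rw [Finset.sum_congr rfl fun m _ => (hc2 m).symm]
      exact htel
    have key : (L - (x n : M)) - ∑ g ∈ s, g • z g
        = (L - (x (n + T) : M)) - ∑ g ∈ s, g • (z g - ∑ m ∈ Finset.range T, c m g) := by
      simp only [smul_sub, Finset.sum_sub_distrib, hsum]
      abel
    rw [key]
    exact Submodule.sub_mem _ hA (sum_mem hB)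
  have hg : ∀ g ∈ s, g ∈ a ^ n := fun g hgs => by
    have hs' : Ideal.span (s : Set R) = a ^ n := hs
    rw [← hs']; exact Ideal.subset_span hgs
  set w : LinearMap.ker f := ∑ g ∈ s, g • (⟨z g, LinearMap.mem_ker.mpr (hzK g)⟩ : LinearMap.ker f) with hw
  have hwmem : w ∈ (a ^ n • ⊤ : Submodule R (LinearMap.ker f)) :=
    sum_mem fun g hgs => smul_mem_smul (hg g hgs) mem_top
  rw [SModEq.sub_mem]
  have hcoe : x n - (⟨L, LinearMap.mem_ker.mpr hLK⟩ : LinearMap.ker f) = -w := by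
    apply Subtype.ext
    have hwcoe : (w : M) = ∑ g ∈ s, g • z g := by
      simp [hw]
    show ((x n : M)) - L = -(w : M)
    rw [hwcoe, ← hmain]
    abel
  rw [hcoe]
  exact neg_mem hwmem

end Aux

/-- If `f : M → N` is a homomorphism of `a`-adically complete modules over a Noetherian
ring, then `ker f` and `im f` are `a`-adically complete. -/
theorem ker_and_range_isAdicComplete
    {R : Type u} [CommRing R] [IsNoetherianRing R] (a : Ideal R)
    (M N : Type u) [AddCommGroup M] [Module R M] [AddCommGroup N] [Module R N]
    [IsAdicComplete a M] [IsAdicComplete a N] (f : M →ₗ[R] N) :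
    IsAdicComplete a (LinearMap.ker f) ∧ IsAdicComplete a (LinearMap.range f) := by
  haveI i1 := isHausdorff_submodule a (LinearMap.ker f)
  haveI i2 := isPrecomplete_ker a f
  haveI h1 : IsHausdorff a (M ⧸ LinearMap.ker f) := isHausdorff_quotient_ker a f
  haveI h2 : IsPrecomplete a (M ⧸ LinearMap.ker f) := isPrecomplete_quotient a _
  haveI i3 := isHausdorff_of_linearEquiv a f.quotKerEquivRange
  haveI i4 := isPrecomplete_of_linearEquiv a f.quotKerEquivRange
  exact ⟨⟨⟩, ⟨⟩⟩
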